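/- For the symmetric generalized binomial distribution with nonnegative probabilities, c_n ≤ n² for all n, where c_n/x_n! is the n-th coefficient of t² N'(t)²/N(t). -/

import Mathlib

open PowerSeries Finset

/-- Formal exponential of a power series (intended for series with zero constant term):
coefficientwise `exp F = ∑_k F^k / k!`, which is a finite sum in each coefficient. -/
noncomputable def expS (F : PowerSeries ℝ) : PowerSeries ℝ :=
  PowerSeries.mk fun n => ∑ k ∈ Finset.range (n + 1),
    (1 / (k.factorial : ℝ)) * PowerSeries.coeff n (F ^ k)

/-- Formal logarithm of a power series (intended for series with constant term 1):
coefficientwise `log N = ∑_{k≥1} (-1)^{k+1} (N-1)^k / k`. -/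
noncomputable def logS (N : PowerSeries ℝ) : PowerSeries ℝ :=
  PowerSeries.mk fun n => ∑ k ∈ Finset.range (n + 1),
    ((-1 : ℝ) ^ (k + 1) / (k : ℝ)) * PowerSeries.coeff n ((N - 1) ^ k)

/-- The formal power `N^η := exp (η · log N)`. -/
noncomputable def powS (N : PowerSeries ℝ) (η : ℝ) : PowerSeries ℝ :=
  expS (η • logS N)

/-- Deformed factorial `x_n! = x_1 x_2 ⋯ x_n`, with `x_0! = 1`. -/
noncomputable def xfac (x : ℕ → ℝ) (n : ℕ) : ℝ := ∏ k ∈ Finset.Icc 1 n, x k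

lemma aux_coeff_pow_lt {F : PowerSeries ℝ} (hF : constantCoeff F = 0)
    (k j : ℕ) (h : j < k) : PowerSeries.coeff j (F ^ k) = 0 := by
  obtain ⟨G, hG⟩ := (PowerSeries.X_dvd_iff).2 hF
  rw [hG, mul_pow, PowerSeries.coeff_X_pow_mul' (G ^ k) k j, if_neg (by omega)]

lemma aux_coeff_derivativeFun (f : PowerSeries ℝ) (n : ℕ) :
    PowerSeries.coeff n (PowerSeries.derivativeFun f) = PowerSeries.coeff (n + 1) f * (n + 1) :=
  PowerSeries.coeff_derivative f n

lemma aux_dpow (F : PowerSeries ℝ) (k : ℕ) :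
    PowerSeries.derivativeFun (F ^ (k+1)) = (k+1 : ℝ) • (F ^ k * PowerSeries.derivativeFun F) := by
  induction k with
  | zero => simp [PowerSeries.derivativeFun]
  | succ k ih =>
    rw [pow_succ, PowerSeries.derivativeFun_mul, ih, smul_eq_mul, smul_eq_mul,
      PowerSeries.smul_eq_C_mul, PowerSeries.smul_eq_C_mul]
    push_cast
    simp only [map_add, map_one]
    ring

lemma aux_coeff_expS {F : PowerSeries ℝ} (hF : constantCoeff F = 0)
    (n m : ℕ) (h : n ≤ m) :
    PowerSeries.coeff n (expS F) = ∑ k ∈ Finset.range (m + 1),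
      (1 / (k.factorial : ℝ)) * PowerSeries.coeff n (F ^ k) := by
  rw [expS, PowerSeries.coeff_mk]
  refine Finset.sum_subset (by intro x hx; simp_all; omega) ?_
  intro k hk hk2
  simp only [Finset.mem_range, not_lt] at hk2
  rw [aux_coeff_pow_lt hF k n (by omega), mul_zero]

lemma aux_deriv_expS {F : PowerSeries ℝ} (hF : constantCoeff F = 0) :
    PowerSeries.derivativeFun (expS F) = PowerSeries.derivativeFun F * expS F := by
  ext n
  rw [aux_coeff_derivativeFun, aux_coeff_expS hF (n+1) (n+1) le_rfl,
    Finset.sum_mul, Finset.sum_range_succ']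
  have hterm : ∀ k, 1 / ((k+1).factorial : ℝ) * PowerSeries.coeff (n+1) (F ^ (k+1)) * ((n:ℝ)+1)
      = 1 / (k.factorial : ℝ) * PowerSeries.coeff n (F ^ k * PowerSeries.derivativeFun F) := by
    intro k
    have h1 : PowerSeries.coeff n (PowerSeries.derivativeFun (F ^ (k+1)))
        = PowerSeries.coeff (n+1) (F ^ (k+1)) * ((n:ℝ)+1) := by
      rw [aux_coeff_derivativeFun]
    rw [mul_assoc, ← h1, aux_dpow, map_smul, smul_eq_mul, Nat.factorial_succ]
    push_cast
    field_simp
  have hRHS : PowerSeries.coeff n (PowerSeries.derivativeFun F * expS F)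
      = ∑ k ∈ Finset.range (n+1),
          1/(k.factorial:ℝ) * PowerSeries.coeff n (F ^ k * PowerSeries.derivativeFun F) := by
    rw [PowerSeries.coeff_mul]
    have step : ∀ p ∈ Finset.HasAntidiagonal.antidiagonal n,
        PowerSeries.coeff p.1 (PowerSeries.derivativeFun F) * PowerSeries.coeff p.2 (expS F)
        = ∑ k ∈ Finset.range (n+1), 1/(k.factorial:ℝ) *
            (PowerSeries.coeff p.1 (PowerSeries.derivativeFun F)
              * PowerSeries.coeff p.2 (F ^ k)) := by
      intro p hp
      rw [Finset.HasAntidiagonal.mem_antidiagonal] at hp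
      rw [aux_coeff_expS hF p.2 n (by omega), Finset.mul_sum]
      exact Finset.sum_congr rfl fun k _ => by ring
    rw [Finset.sum_congr rfl step, Finset.sum_comm]
    refine Finset.sum_congr rfl fun k _ => ?_
    rw [← Finset.mul_sum, ← PowerSeries.coeff_mul, mul_comm (F.derivativeFun)]
  rw [hRHS, Finset.sum_congr rfl (fun k _ => hterm k)]
  simp

lemma aux_dX : PowerSeries.derivativeFun (PowerSeries.X : PowerSeries ℝ) = 1 :=
  PowerSeries.derivative_X

lemma aux_mul_nonneg {f g : PowerSeries ℝ} (hf : ∀ i, 0 ≤ PowerSeries.coeff i f)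
    (hg : ∀ i, 0 ≤ PowerSeries.coeff i g) (n : ℕ) : 0 ≤ PowerSeries.coeff n (f * g) := by
  rw [PowerSeries.coeff_mul]
  exact Finset.sum_nonneg fun p _ => mul_nonneg (hf _) (hg _)

lemma aux_pow_nonneg {f : PowerSeries ℝ} (hf : ∀ i, 0 ≤ PowerSeries.coeff i f) (k : ℕ) :
    ∀ n, 0 ≤ PowerSeries.coeff n (f ^ k) := by
  induction k with
  | zero => intro n; rw [pow_zero, PowerSeries.coeff_one]; positivity
  | succ k ih => intro n; rw [pow_succ]; exact aux_mul_nonneg ih hf n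

lemma aux_X_mul_nonneg {f : PowerSeries ℝ} (hf : ∀ i, 0 ≤ PowerSeries.coeff i f) (n : ℕ) :
    0 ≤ PowerSeries.coeff n (PowerSeries.X * f) := by
  cases n with
  | zero => rw [PowerSeries.coeff_zero_X_mul]
  | succ m => rw [PowerSeries.coeff_succ_X_mul]; exact hf m

lemma aux_dF_nonneg {f : PowerSeries ℝ} (hf : ∀ i, 0 ≤ PowerSeries.coeff i f) (n : ℕ) :
    0 ≤ PowerSeries.coeff n (PowerSeries.derivativeFun f) := by
  rw [aux_coeff_derivativeFun]
  exact mul_nonneg (hf _) (by positivity)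

theorem stmt11 (a : ℕ → ℝ) (ha0 : a 0 = 0) (ha1 : 0 < a 1) (ha : ∀ n, 1 ≤ n → 0 ≤ a n)
    (N : PowerSeries ℝ) (hN : N = expS (PowerSeries.mk a))
    (xf : ℕ → ℝ) (hxf : ∀ n, xf n = (PowerSeries.coeff n N)⁻¹)
    (c : ℕ → ℝ)
    (hc : ∀ n, c n = xf n *
      PowerSeries.coeff n (PowerSeries.X ^ 2 * N.derivativeFun ^ 2 * N⁻¹)) :
    ∀ n : ℕ, c n ≤ (n : ℝ) ^ 2 := by
  set F : PowerSeries ℝ := PowerSeries.mk a with hF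
  set dF : PowerSeries ℝ := PowerSeries.derivativeFun F with hdFdef
  have haall : ∀ i, 0 ≤ a i := by
    intro i
    rcases Nat.eq_zero_or_pos i with h | h
    · simp [h, ha0]
    · exact ha i h
  have hFc : ∀ i, PowerSeries.coeff i F = a i := fun i => PowerSeries.coeff_mk i a
  have hFn : ∀ i, 0 ≤ PowerSeries.coeff i F := fun i => (hFc i) ▸ haall i
  have hF0 : constantCoeff F = 0 := by
    rw [← PowerSeries.coeff_zero_eq_constantCoeff, hFc 0, ha0]
  -- coefficients of N are nonnegative
  have hNc : ∀ n, PowerSeries.coeff n N = ∑ k ∈ Finset.range (n + 1),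
      (1 / (k.factorial : ℝ)) * PowerSeries.coeff n (F ^ k) := by
    intro n; rw [hN]; exact aux_coeff_expS hF0 n n le_rfl
  have hNn : ∀ n, 0 ≤ PowerSeries.coeff n N := by
    intro n; rw [hNc]
    exact Finset.sum_nonneg fun k _ => mul_nonneg (by positivity) (aux_pow_nonneg hFn k n)
  -- positivity of coefficients of N
  have hpow : ∀ n, a 1 ^ n ≤ PowerSeries.coeff n (F ^ n) := by
    intro n
    induction n with
    | zero => simp
    | succ n ih =>
      rw [pow_succ, pow_succ, PowerSeries.coeff_mul]
      have hmem : ((n : ℕ), (1 : ℕ)) ∈ Finset.HasAntidiagonal.antidiagonal (n + 1) := by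
        rw [Finset.HasAntidiagonal.mem_antidiagonal]
      calc a 1 ^ n * a 1 ≤ PowerSeries.coeff n (F ^ n) * PowerSeries.coeff 1 F := by
            apply mul_le_mul ih (le_of_eq (hFc 1).symm) (le_of_lt ha1)
            exact aux_pow_nonneg hFn n n
        _ ≤ _ := Finset.single_le_sum (f := fun p =>
              PowerSeries.coeff p.1 (F ^ n) * PowerSeries.coeff p.2 F)
            (fun p _ => mul_nonneg (aux_pow_nonneg hFn n p.1) (hFn p.2)) hmem
  have hNpos : ∀ n, 0 < PowerSeries.coeff n N := by
    intro n
    rw [hNc]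
    refine Finset.sum_pos' (fun k _ => mul_nonneg (by positivity) (aux_pow_nonneg hFn k n))
      ⟨n, Finset.self_mem_range_succ n, ?_⟩
    have : (0:ℝ) < a 1 ^ n := pow_pos ha1 n
    have h2 := hpow n
    have h3 : 0 < PowerSeries.coeff n (F ^ n) := lt_of_lt_of_le this h2
    positivity
  -- derivative facts
  have hdN : PowerSeries.derivativeFun N = dF * N := by
    rw [hN, hdFdef, hF]; exact aux_deriv_expS hF0
  have hN0 : constantCoeff N = 1 := by
    rw [← PowerSeries.coeff_zero_eq_constantCoeff, hNc 0]
    simp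
  have hNu : N * N⁻¹ = 1 := PowerSeries.mul_inv_cancel N (by rw [hN0]; norm_num)
  have hXd : ∀ (f : PowerSeries ℝ) (n : ℕ),
      PowerSeries.coeff n (PowerSeries.X * PowerSeries.derivativeFun f)
        = n * PowerSeries.coeff n f := by
    intro f n
    cases n with
    | zero => simp [PowerSeries.coeff_zero_X_mul]
    | succ m =>
      rw [PowerSeries.coeff_succ_X_mul, aux_coeff_derivativeFun]
      push_cast; ring
  -- the key series identity
  have key : PowerSeries.X * PowerSeries.derivativeFun
        (PowerSeries.X * PowerSeries.derivativeFun N)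
      = PowerSeries.X ^ 2 * dF ^ 2 * N
        + (PowerSeries.X * dF + PowerSeries.X ^ 2 * PowerSeries.derivativeFun dF) * N := by
    rw [PowerSeries.derivativeFun_mul PowerSeries.X (PowerSeries.derivativeFun N), hdN,
      PowerSeries.derivativeFun_mul dF N, hdN, aux_dX]
    simp only [smul_eq_mul, mul_one]
    ring
  -- nonnegativity of the Q*N coefficients
  have hQn : ∀ i, 0 ≤ PowerSeries.coeff i
      ((PowerSeries.X * dF + PowerSeries.X ^ 2 * PowerSeries.derivativeFun dF) * N) := by
    intro i
    apply aux_mul_nonneg _ hNn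
    intro j
    rw [map_add]
    have h1 : 0 ≤ PowerSeries.coeff j (PowerSeries.X * dF) :=
      aux_X_mul_nonneg (aux_dF_nonneg hFn) j
    have h2 : 0 ≤ PowerSeries.coeff j
        (PowerSeries.X ^ 2 * PowerSeries.derivativeFun dF) := by
      rw [pow_two, mul_assoc]
      exact aux_X_mul_nonneg (aux_X_mul_nonneg (aux_dF_nonneg (aux_dF_nonneg hFn))) j
    linarith
  -- main coefficient inequality
  intro n
  have hident : (n : ℝ) ^ 2 * PowerSeries.coeff n N
      = PowerSeries.coeff n (PowerSeries.X ^ 2 * dF ^ 2 * N)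
        + PowerSeries.coeff n
          ((PowerSeries.X * dF + PowerSeries.X ^ 2 * PowerSeries.derivativeFun dF) * N) := by
    have h1 := hXd (PowerSeries.X * PowerSeries.derivativeFun N) n
    have h2 := hXd N n
    rw [← map_add, ← key, h1, h2]
    ring
  have hconv : PowerSeries.X ^ 2 * N.derivativeFun ^ 2 * N⁻¹
      = PowerSeries.X ^ 2 * dF ^ 2 * N := by
    rw [hdN]
    calc PowerSeries.X ^ 2 * (dF * N) ^ 2 * N⁻¹
        = PowerSeries.X ^ 2 * dF ^ 2 * N * (N * N⁻¹) := by ring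
      _ = PowerSeries.X ^ 2 * dF ^ 2 * N := by rw [hNu, mul_one]
  rw [hc, hxf, hconv, inv_mul_eq_div, div_le_iff₀ (hNpos n)]
  have := hQn n
  linarith [hident]
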